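/- For every integer r ≥ 1, the Bernoulli number B_{2r} satisfies B_{2r} = ((−1)^{r−1}·(2r)!·2^{1−2r}/(π^r·(2r−1)·r!)) · Σ_{n=0}^∞ a_{2n}·(2r − 1/2)^{2n}. -/

import Mathlib

open Complex

noncomputable def riemannXi (s : ℂ) : ℂ := (1 / 2) * s * (s - 1) * completedRiemannZeta s

noncomputable def a (n : ℕ) : ℝ :=
  (iteratedDeriv (2 * n) riemannXi (1 / 2)).re / (2 * n).factorial

/-- Entire version of xi. -/
noncomputable def XiG (s : ℂ) : ℂ := (1 / 2) * s * (s - 1) * completedRiemannZeta₀ s + 1 / 2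

lemma XiG_diff : Differentiable ℂ XiG := by
  unfold XiG
  exact ((((differentiable_const _).mul differentiable_id).mul
    (differentiable_id.sub_const 1)).mul differentiable_completedZeta₀).add_const _

lemma xi_eq_XiG {s : ℂ} (h0 : s ≠ 0) (h1 : s ≠ 1) : riemannXi s = XiG s := by
  have h1' : (1 : ℂ) - s ≠ 0 := sub_ne_zero.mpr (Ne.symm h1)
  unfold riemannXi XiG
  rw [completedRiemannZeta_eq]
  field_simp
  ring

lemma XiG_symm (s : ℂ) : XiG (1 - s) = XiG s := by
  unfold XiG
  rw [completedRiemannZeta₀_one_sub]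
  ring

lemma xi_deriv_eq (n : ℕ) :
    iteratedDeriv n riemannXi (1 / 2) = iteratedDeriv n XiG (1 / 2) := by
  refine Filter.EventuallyEq.iteratedDeriv_eq n ?_
  have hopen : IsOpen ({0, 1}ᶜ : Set ℂ) := (Set.toFinite ({0,1}:Set ℂ)).isClosed.isOpen_compl
  have hmem : (1 / 2 : ℂ) ∈ ({0, 1}ᶜ : Set ℂ) := by
    simp only [Set.mem_compl_iff, Set.mem_insert_iff, Set.mem_singleton_iff]
    push_neg
    constructor <;> norm_num
  filter_upwards [hopen.mem_nhds hmem] with s hs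
  simp only [Set.mem_compl_iff, Set.mem_insert_iff, Set.mem_singleton_iff] at hs
  push_neg at hs
  exact xi_eq_XiG hs.1 hs.2

lemma XiG_odd_deriv (n : ℕ) (hn : Odd n) : iteratedDeriv n XiG (1 / 2) = 0 := by
  set F : ℂ → ℂ := fun t => XiG (t + 1 / 2) with hF
  have hFe : (fun t => F (-t)) = F := by
    funext t
    show XiG (-t + 1 / 2) = XiG (t + 1 / 2)
    rw [show -t + 1 / 2 = 1 - (t + 1 / 2) by ring, XiG_symm]
  have h1 : iteratedDeriv n F 0 = iteratedDeriv n XiG (1 / 2) := by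
    have := iteratedDeriv_comp_add_const n XiG (1 / 2)
    rw [hF, this]
    norm_num
  have h2 := iteratedDeriv_comp_neg n F 0
  rw [hFe, neg_zero] at h2
  rw [hn.neg_one_pow, neg_one_smul] at h2
  rw [← h1]
  linear_combination (2:ℂ)⁻¹ * h2

theorem bernoulli_eq_sum_a (r : ℕ) (hr : 1 ≤ r) :
    ((bernoulli (2 * r) : ℚ) : ℝ) =
      ((-1) ^ (r - 1) * ((2 * r).factorial : ℝ) * (2 : ℝ) ^ (1 - 2 * (r : ℤ)) /
          (Real.pi ^ r * (2 * (r : ℝ) - 1) * (r.factorial : ℝ))) *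
        ∑' n : ℕ, a n * (2 * (r : ℝ) - 1 / 2) ^ (2 * n) := by
  obtain ⟨m, rfl⟩ : ∃ m, r = m + 1 := ⟨r - 1, by omega⟩
  set x : ℝ := 2 * ((m + 1 : ℕ) : ℝ) - 1 / 2 with hxdef
  set z : ℂ := 2 * ((m + 1 : ℕ) : ℂ) with hzdef
  have hz : z - 1 / 2 = (x : ℂ) := by rw [hzdef, hxdef]; push_cast; ring
  have hz2 : z = ((2 * (m + 1) : ℕ) : ℂ) := by rw [hzdef]; push_cast; ring
  -- Taylor series of XiG at 1/2 evaluated at z, real parts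
  have hsum := Complex.hasSum_taylorSeries_of_entire XiG_diff (1 / 2) z
  have hre := Complex.hasSum_re hsum
  have hre' : HasSum (fun n : ℕ => ((n.factorial : ℝ))⁻¹ * x ^ n
      * (iteratedDeriv n XiG (1 / 2)).re) (XiG z).re := by
    convert hre using 2 with n
    rw [hz, smul_eq_mul, smul_eq_mul,
      show ((n.factorial : ℂ))⁻¹ * ((x : ℂ) ^ n * iteratedDeriv n XiG (1 / 2))
        = ((((n.factorial : ℝ))⁻¹ * x ^ n : ℝ) : ℂ) * iteratedDeriv n XiG (1 / 2) by
          push_cast; ring,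
      Complex.re_ofReal_mul, mul_assoc]
  have hzero : ∀ k ∉ Set.range (fun n : ℕ => 2 * n),
      ((k.factorial : ℝ))⁻¹ * x ^ k * (iteratedDeriv k XiG (1 / 2)).re = 0 := by
    intro k hk
    have hodd : Odd k := by
      rcases Nat.even_or_odd k with he | ho
      · obtain ⟨j, hj⟩ := he
        exact absurd ⟨j, show 2 * j = k by omega⟩ hk
      · exact ho
    rw [XiG_odd_deriv k hodd]
    simp
  have heven : HasSum (fun n : ℕ => (((2 * n).factorial : ℝ))⁻¹ * x ^ (2 * n)
      * (iteratedDeriv (2 * n) XiG (1 / 2)).re) (XiG z).re :=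
    (Function.Injective.hasSum_iff (fun a b h => by omega) hzero).mpr hre'
  have hts : ∑' n : ℕ, a n * x ^ (2 * n) = (XiG z).re := by
    rw [← heven.tsum_eq]
    congr 1
    funext n
    rw [a, xi_deriv_eq, div_eq_mul_inv]
    ring
  -- value of XiG at z
  have h0 : z ≠ 0 := by
    rw [hz2]
    exact Nat.cast_ne_zero.mpr (by omega)
  have h1 : z ≠ 1 := by
    rw [hz2, show (1 : ℂ) = ((1 : ℕ) : ℂ) by norm_num]
    intro h
    exact absurd (Nat.cast_inj.mp h) (by omega)
  have hrepos : 0 < z.re := by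
    rw [hz2]
    simp only [Complex.natCast_re]
    exact_mod_cast Nat.pos_of_ne_zero (by omega)
  have hΛ : completedRiemannZeta z = Gammaℝ z * riemannZeta z := by
    rw [riemannZeta_def_of_ne_zero h0, mul_div_cancel₀ _ (Gammaℝ_ne_zero_of_re_pos hrepos)]
  have hζ : riemannZeta z = (-1) ^ ((m + 1) + 1) * (2 : ℂ) ^ (2 * (m + 1) - 1)
      * (Real.pi : ℂ) ^ (2 * (m + 1)) * bernoulli (2 * (m + 1)) / (2 * (m + 1)).factorial :=
    riemannZeta_two_mul_nat (by omega : m + 1 ≠ 0)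
  have hΓ : Gammaℝ z = ((((Real.pi) ^ (m + 1))⁻¹ * m.factorial : ℝ) : ℂ) := by
    rw [Gammaℝ_def, show -z / 2 = -(((m + 1 : ℕ) : ℂ)) by rw [hzdef]; ring,
      show z / 2 = ((m : ℂ) + 1) by rw [hzdef]; push_cast; ring,
      Complex.Gamma_nat_eq_factorial, Complex.cpow_neg, Complex.cpow_natCast]
    push_cast
    ring
  set B : ℝ := ((bernoulli (2 * (m + 1)) : ℚ) : ℝ) with hB
  have hXiz : XiG z = ((((1 : ℝ) / 2) * (2 * (m + 1)) * (2 * (m + 1) - 1)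
      * ((Real.pi ^ (m + 1))⁻¹ * m.factorial)
      * ((-1) ^ (m + 2) * 2 ^ (2 * m + 1) * Real.pi ^ (2 * (m + 1)) * B
        / (2 * (m + 1)).factorial) : ℝ) : ℂ) := by
    rw [← xi_eq_XiG h0 h1, riemannXi, hΛ, hζ, hΓ]
    rw [show 2 * (m + 1) - 1 = 2 * m + 1 by omega, hzdef, hB]
    push_cast
    ring
  rw [hts, hXiz, Complex.ofReal_re]
  -- final real algebra
  have hpow : (2 : ℝ) ^ (1 - 2 * ((m + 1 : ℕ) : ℤ)) = ((2 : ℝ) ^ (2 * m + 1))⁻¹ := by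
    rw [show (1 - 2 * ((m + 1 : ℕ) : ℤ)) = -((2 * m + 1 : ℕ) : ℤ) by push_cast; ring,
      zpow_neg, zpow_natCast]
  rw [hpow]
  have hπ : Real.pi ≠ 0 := Real.pi_ne_zero
  have hf1 : ((2 * (m + 1)).factorial : ℝ) ≠ 0 := Nat.cast_ne_zero.mpr (Nat.factorial_ne_zero _)
  have hf2 : (m.factorial : ℝ) ≠ 0 := Nat.cast_ne_zero.mpr (Nat.factorial_ne_zero _)
  have hrm : (2 * (((m + 1) : ℕ) : ℝ) - 1) ≠ 0 := by
    have : (1 : ℝ) ≤ ((m + 1 : ℕ) : ℝ) := by exact_mod_cast hr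
    nlinarith
  have hfr : (((m + 1).factorial : ℕ) : ℝ) = (m + 1) * m.factorial := by
    rw [Nat.factorial_succ]
    push_cast
    ring
  have hm1 : m + 1 - 1 = m := by omega
  have hsign : ((-1 : ℝ)) ^ (m + 2) = (-1) ^ m := by
    rw [pow_succ, pow_succ]
    ring
  rw [hm1, hfr, hsign]
  set c : ℝ := 2 * (m : ℝ) + 1 with hcdef
  rw [show 2 * (((m + 1) : ℕ) : ℝ) - 1 = c by rw [hcdef]; push_cast; ring,
    show 2 * ((m : ℝ) + 1) - 1 = c by rw [hcdef]; ring]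
  have hcne : c ≠ 0 := by positivity
  have hm2 : ((m : ℝ) + 1) ≠ 0 := by positivity
  have hp2 : ((2 : ℝ) ^ (2 * m + 1)) ≠ 0 := by positivity
  have hπp : (Real.pi ^ (m + 1)) ≠ 0 := pow_ne_zero _ hπ
  rcases Nat.even_or_odd m with hpar | hpar
  · rw [hpar.neg_one_pow]
    field_simp
    ring
  · rw [hpar.neg_one_pow]
    field_simp
    ring
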